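/- Let V be a finite type and P : Matrix V V ℝ a row-stochastic matrix that is an absorbing chain with absorbing states Abs. Then for every state v, the total absorption probability tends to 1: Filter.Tendsto (fun n => ∑ a ∈ Abs, (P ^ n) v a) Filter.atTop (nhds 1). -/

import Mathlib

/-- **Total absorption.**
In a row-stochastic absorbing chain, from every state the probability of
being absorbed (in any absorbing state) within `n` steps tends to `1`. -/
theorem absorbing_chain_total_absorption_tendsto_one
    {V : Type*} [Fintype V] [DecidableEq V]
    (P : Matrix V V ℝ)
    (hnonneg : ∀ v w, 0 ≤ P v w)
    (hrow : ∀ v, ∑ w, P v w = 1)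
    (Abs : Finset V) (hAbs : ∀ a : V, a ∈ Abs ↔ P a a = 1)
    (hchain : ∀ v : V, ∃ (n : ℕ) (a : V), a ∈ Abs ∧ 0 < (P ^ n) v a) :
    ∀ v : V, Filter.Tendsto (fun n => ∑ a ∈ Abs, (P ^ n) v a)
      Filter.atTop (nhds 1) := by
  intro v
  haveI : Nonempty V := ⟨v⟩
  -- powers are nonnegative
  have hpn : ∀ n (u w : V), 0 ≤ (P ^ n) u w := by
    intro n
    induction n with
    | zero =>
      intro u w
      simp only [pow_zero, Matrix.one_apply]
      split <;> norm_num
    | succ n ih =>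
      intro u w
      rw [pow_succ, Matrix.mul_apply]
      exact Finset.sum_nonneg fun x _ => mul_nonneg (ih u x) (hnonneg x w)
  -- powers are row-stochastic
  have hpr : ∀ n (u : V), ∑ w, (P ^ n) u w = 1 := by
    intro n
    induction n with
    | zero =>
      intro u
      simp [Matrix.one_apply]
    | succ n ih =>
      intro u
      simp only [pow_succ, Matrix.mul_apply]
      rw [Finset.sum_comm]
      calc (∑ x, ∑ w, (P ^ n) u x * P x w)
          = ∑ x : V, (P ^ n) u x * ∑ w, P x w := by
            simp [Finset.mul_sum]
        _ = 1 := by simp only [hrow, mul_one]; exact ih u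
  -- absorbing rows of powers
  have habs0 : ∀ a ∈ Abs, ∀ w, w ≠ a → P a w = 0 := by
    intro a ha w hw
    have h1 : P a a = 1 := (hAbs a).mp ha
    have h2 : ∑ w ∈ (Finset.univ.erase a), P a w = 0 := by
      have := hrow a
      rw [← Finset.add_sum_erase _ _ (Finset.mem_univ a)] at this
      linarith
    have := (Finset.sum_eq_zero_iff_of_nonneg
      (fun x _ => hnonneg a x)).mp h2 w (Finset.mem_erase.mpr ⟨hw, Finset.mem_univ w⟩)
    exact this
  have habspow : ∀ a ∈ Abs, ∀ n (w : V), (P ^ n) a w = if w = a then 1 else 0 := by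
    intro a ha n
    induction n with
    | zero =>
      intro w
      simp [Matrix.one_apply, eq_comm]
    | succ n ih =>
      intro w
      rw [pow_succ', Matrix.mul_apply]
      rw [Finset.sum_eq_single a]
      · rw [(hAbs a).mp ha, ih w]; ring
      · intro b _ hb
        rw [habs0 a ha b hb, zero_mul]
      · simp
  set f : ℕ → V → ℝ := fun n u => ∑ a ∈ Abs, (P ^ n) u a with hf
  have hf1 : ∀ n, ∀ a ∈ Abs, f n a = 1 := by
    intro n a ha
    simp only [hf]
    rw [Finset.sum_eq_single a]
    · simp [habspow a ha n]
    · intro b _ hb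
      simp [habspow a ha n, hb]
    · intro h; exact absurd ha h
  have hfnn : ∀ n u, 0 ≤ f n u :=
    fun n u => Finset.sum_nonneg fun a _ => hpn n u a
  have hfle : ∀ n u, f n u ≤ 1 := by
    intro n u
    rw [← hpr n u]
    exact Finset.sum_le_sum_of_subset_of_nonneg (Finset.subset_univ _)
      (fun x _ _ => hpn n u x)
  have hrec : ∀ n m (u : V), f (n + m) u = ∑ w, (P ^ n) u w * f m w := by
    intro n m u
    simp only [hf, pow_add, Matrix.mul_apply, Finset.mul_sum]
    rw [Finset.sum_comm]
  have hmono : ∀ n m (u : V), f n u ≤ f (n + m) u := by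
    intro n m u
    rw [hrec]
    calc f n u = ∑ w ∈ Abs, (P ^ n) u w * f m w := by
          apply Finset.sum_congr rfl
          intro w hw
          rw [hf1 m w hw, mul_one]
      _ ≤ ∑ w, (P ^ n) u w * f m w :=
          Finset.sum_le_sum_of_subset_of_nonneg (Finset.subset_univ _)
            (fun x _ _ => mul_nonneg (hpn n u x) (hfnn m x))
  have hmono' : ∀ {n n'}, n ≤ n' → ∀ u, f n u ≤ f n' u := by
    intro n n' h u
    obtain ⟨m, rfl⟩ := Nat.exists_eq_add_of_le h
    exact hmono n m u
  -- choose N and ε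
  choose na aa haa hpos using hchain
  set N : ℕ := (Finset.univ.sup na) + 1 with hN
  have hN1 : 1 ≤ N := Nat.le_add_left 1 _
  have hposN : ∀ u, 0 < f N u := by
    intro u
    have h1 : 0 < f (na u) u := by
      have : (P ^ na u) u (aa u) ≤ f (na u) u :=
        Finset.single_le_sum (fun a _ => hpn (na u) u a) (haa u)
      exact lt_of_lt_of_le (hpos u) this
    exact lt_of_lt_of_le h1 (hmono' (le_trans (Finset.le_sup (Finset.mem_univ u))
      (Nat.le_succ _)) u)
  set ε : ℝ := Finset.univ.inf' Finset.univ_nonempty (f N) with hε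
  have hεpos : 0 < ε := by
    rw [hε, Finset.lt_inf'_iff]
    intro u _
    exact hposN u
  have hεle : ∀ u, ε ≤ f N u := fun u => Finset.inf'_le _ (Finset.mem_univ u)
  have hε1 : ε ≤ 1 := le_trans (hεle v) (hfle N v)
  -- contraction step
  have hcontr : ∀ m (u : V), 1 - f (m + N) u ≤ (1 - ε) * (1 - f m u) := by
    intro m u
    have h1 : 1 - f (m + N) u = ∑ w, (P ^ m) u w * (1 - f N w) := by
      rw [hrec m N u]
      simp only [mul_sub, mul_one, Finset.sum_sub_distrib, hpr m u]
    rw [h1]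
    have h2 : ∀ w : V, (P ^ m) u w * (1 - f N w) ≤
        (1 - ε) * ((P ^ m) u w * (if w ∈ Abs then 0 else 1)) := by
      intro w
      by_cases hw : w ∈ Abs
      · simp [hw, hf1 N w hw]
      · simp only [hw, if_false, mul_one]
        rw [mul_comm (1 - ε)]
        exact mul_le_mul_of_nonneg_left (by linarith [hεle w]) (hpn m u w)
    calc (∑ w, (P ^ m) u w * (1 - f N w))
        ≤ ∑ w, (1 - ε) * ((P ^ m) u w * (if w ∈ Abs then 0 else 1)) :=
          Finset.sum_le_sum fun w _ => h2 w
      _ = (1 - ε) * ∑ w, (P ^ m) u w * (if w ∈ Abs then 0 else 1) := by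
          rw [Finset.mul_sum]
      _ = (1 - ε) * (1 - f m u) := by
          congr 1
          have : ∀ w : V, (P ^ m) u w * (if w ∈ Abs then 0 else 1) =
              (P ^ m) u w - (if w ∈ Abs then (P ^ m) u w else 0) := by
            intro w; split <;> ring
          simp only [this, Finset.sum_sub_distrib, hpr m u, Finset.sum_ite_mem,
            Finset.univ_inter]
          rfl
  -- iterate
  have hiter : ∀ k (u : V), 1 - f (k * N) u ≤ (1 - ε) ^ k := by
    intro k u
    induction k with
    | zero => simpa using hfnn 0 u
    | succ k ih =>
      have : (k + 1) * N = k * N + N := by ring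
      rw [this, pow_succ]
      calc 1 - f (k * N + N) u ≤ (1 - ε) * (1 - f (k * N) u) := hcontr (k * N) u
        _ ≤ (1 - ε) ^ k * (1 - ε) := by
            rw [mul_comm ((1 - ε) ^ k)]
            exact mul_le_mul_of_nonneg_left ih (show (0:ℝ) ≤ 1 - ε by linarith)
  -- squeeze
  have hbound : ∀ n, 1 - f n v ≤ (1 - ε) ^ (n / N) := by
    intro n
    have h1 : (n / N) * N ≤ n := Nat.div_mul_le_self n N
    calc 1 - f n v ≤ 1 - f ((n / N) * N) v := by linarith [hmono' h1 v]
      _ ≤ (1 - ε) ^ (n / N) := hiter (n / N) v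
  have hdiv : Filter.Tendsto (fun n : ℕ => n / N) Filter.atTop Filter.atTop := by
    apply Filter.tendsto_atTop_atTop.mpr
    intro b
    exact ⟨b * N, fun n hn => (Nat.le_div_iff_mul_le (by omega)).mpr hn⟩
  have hpow : Filter.Tendsto (fun n : ℕ => (1 - ε) ^ (n / N)) Filter.atTop (nhds 0) :=
    (tendsto_pow_atTop_nhds_zero_of_lt_one (by linarith) (by linarith)).comp hdiv
  have hzero : Filter.Tendsto (fun n => 1 - f n v) Filter.atTop (nhds 0) :=
    squeeze_zero (fun n => by linarith [hfle n v]) hbound hpow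
  have := Filter.Tendsto.const_sub (1 : ℝ) hzero
  simpa using this
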